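/- Let G and K be finite groups with |G| ≤ |K|, let S be a set with |S| ≥ |K|, and let γ : G → S and κ : K → S be injections. Suppose the set Z of pairs (x,y) ∈ G × G for which there exist x', y' ∈ K with γ(x) = κ(x'), γ(y) = κ(y'), and γ(x·y) = κ(x'·y') has cardinality strictly greater than (7/9)·|G|². Then G is isomorphic to a subgroup of K. -/

import Mathlib

open Finset

set_option maxHeartbeats 2000000 in
theorem stmt_4 {G K : Type*} {S : Type*} [Group G] [Group K] [Finite G] [Finite K]
    (hGK : Nat.card G ≤ Nat.card K) (hS : Nat.card S ≥ Nat.card K)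
    (γ : G → S) (κ : K → S)
    (hγ : Function.Injective γ) (hκ : Function.Injective κ)
    (hZ : 9 * Nat.card {p : G × G // ∃ x' y' : K,
        γ p.1 = κ x' ∧ γ p.2 = κ y' ∧ γ (p.1 * p.2) = κ (x' * y')} > 7 * (Nat.card G) ^ 2) :
    ∃ ψ : G →* K, Function.Injective ψ := by
  classical
  cases nonempty_fintype G
  cases nonempty_fintype K
  set n := Fintype.card G with hn
  have hnpos : 0 < n := Fintype.card_pos
  -- a partial inverse of κ composed with γ
  obtain ⟨f, hfspec⟩ : ∃ f : G → K, ∀ x x', γ x = κ x' → f x = x' := by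
    refine ⟨fun x => if hx : ∃ x', γ x = κ x' then hx.choose else 1, fun x x' h => ?_⟩
    have hx : ∃ c, γ x = κ c := ⟨x', h⟩
    simp only [dif_pos hx]
    exact hκ (hx.choose_spec.symm.trans h)
  -- Z as a finset
  set Zs : Finset (G × G) := univ.filter (fun p => ∃ x' y' : K,
      γ p.1 = κ x' ∧ γ p.2 = κ y' ∧ γ (p.1 * p.2) = κ (x' * y')) with hZs
  have hZcard : 7 * n ^ 2 < 9 * Zs.card := by
    have h1 : Nat.card {p : G × G // ∃ x' y' : K,
        γ p.1 = κ x' ∧ γ p.2 = κ y' ∧ γ (p.1 * p.2) = κ (x' * y')} = Zs.card := by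
      rw [Nat.card_eq_fintype_card, Fintype.card_subtype]
    have h2 : Nat.card G = n := Nat.card_eq_fintype_card
    rw [h1, h2] at hZ
    exact hZ
  have hZmul : ∀ p ∈ Zs, f (p.1 * p.2) = f p.1 * f p.2 ∧ κ (f p.1) = γ p.1 := by
    intro p hp
    rw [hZs, mem_filter] at hp
    obtain ⟨-, x', y', h1, h2, h3⟩ := hp
    rw [hfspec p.1 x' h1, hfspec p.2 y' h2, hfspec _ _ h3]
    exact ⟨rfl, h1.symm⟩
  -- bad pairs
  set Bs : Finset (G × G) := univ.filter (fun p => ¬ (f (p.1 * p.2) = f p.1 * f p.2)) with hBs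
  have hBcard : 9 * Bs.card < 2 * n ^ 2 := by
    have hsub : Zs ⊆ univ.filter (fun p : G × G => f (p.1 * p.2) = f p.1 * f p.2) := by
      intro p hp
      exact mem_filter.mpr ⟨mem_univ _, (hZmul p hp).1⟩
    have hle := card_le_card hsub
    have hpart := card_filter_add_card_filter_not
      (s := (univ : Finset (G × G))) (fun p : G × G => f (p.1 * p.2) = f p.1 * f p.2)
    have huniv : (univ : Finset (G × G)).card = n ^ 2 := by
      simp [card_univ, sq, hn]
    rw [huniv] at hpart
    have hBeq : (univ.filter (fun a : G × G => ¬ f (a.1 * a.2) = f a.1 * f a.2)).card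
        = Bs.card := by congr 1
    omega
  -- quotient function and counts
  set cfn : G → G → K := fun x y => f (x * y) * (f y)⁻¹ with hcfn
  set cnt : G → K → ℕ := fun x c => (univ.filter fun y => cfn x y = c).card with hcnt
  have hcnt_le : ∀ x c, cnt x c ≤ n := by
    intro x c
    exact (card_filter_le _ _).trans (by simp [hn])
  -- choose the majority value
  obtain ⟨hm, hmspec⟩ : ∃ hm : G → K, ∀ x c', cnt x c' ≤ cnt x (hm x) := by
    have : ∀ x : G, ∃ c : K, ∀ c', cnt x c' ≤ cnt x c := by
      intro x
      obtain ⟨b, -, hb⟩ := Finset.exists_max_image univ (cnt x) ⟨1, mem_univ 1⟩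
      exact ⟨b, fun c' => hb c' (mem_univ _)⟩
    exact ⟨fun x => (this x).choose, fun x => (this x).choose_spec⟩
  -- the key majority bound : cnt x (hm x) > 2n/3
  have hM : ∀ x : G, 2 * n < 3 * cnt x (hm x) := by
    intro x
    set M := cnt x (hm x) with hMdef
    have hMn : M ≤ n := hcnt_le x _
    -- collision set
    set Coll : Finset (G × G) := univ.filter (fun p => cfn x p.2 = cfn x p.1) with hColl
    -- lower bound on collisions
    have hColl_lb : n ^ 2 ≤ Coll.card + 2 * Bs.card := by
      have hpart := card_filter_add_card_filter_not
        (s := (univ : Finset (G × G))) (fun p : G × G => cfn x p.2 = cfn x p.1)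
      have huniv : (univ : Finset (G × G)).card = n ^ 2 := by simp [card_univ, sq, hn]
      rw [huniv] at hpart
      set NColl : Finset (G × G) := univ.filter (fun p : G × G => ¬ (cfn x p.2 = cfn x p.1))
        with hNColl
      have hNeq : (univ.filter (fun p : G × G => ¬ (cfn x p.2 = cfn x p.1))).card
          = NColl.card := by congr 1
      set B1 : Finset (G × G) := univ.filter (fun p : G × G => (x * p.1, p.1⁻¹ * p.2) ∈ Bs)
        with hB1
      set B2 : Finset (G × G) := univ.filter (fun p : G × G => (p.1, p.1⁻¹ * p.2) ∈ Bs)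
        with hB2
      have hsub : NColl ⊆ B1 ∪ B2 := by
        intro p hp
        rw [hNColl, mem_filter] at hp
        by_contra hmem
        rw [mem_union] at hmem
        push_neg at hmem
        obtain ⟨h1, h2⟩ := hmem
        rw [hB1, mem_filter] at h1
        rw [hB2, mem_filter] at h2
        have hb1 : f ((x * p.1) * (p.1⁻¹ * p.2)) = f (x * p.1) * f (p.1⁻¹ * p.2) := by
          have := fun h => h1 ⟨mem_univ _, h⟩
          by_contra hc
          exact this (by
            rw [hBs, mem_filter]
            exact ⟨mem_univ _, hc⟩)
        have hb2 : f (p.1 * (p.1⁻¹ * p.2)) = f p.1 * f (p.1⁻¹ * p.2) := by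
          have := fun h => h2 ⟨mem_univ _, h⟩
          by_contra hc
          exact this (by
            rw [hBs, mem_filter]
            exact ⟨mem_univ _, hc⟩)
        apply hp.2
        have e1 : (x * p.1) * (p.1⁻¹ * p.2) = x * p.2 := by group
        have e2 : p.1 * (p.1⁻¹ * p.2) = p.2 := by group
        rw [e1] at hb1
        rw [e2] at hb2
        simp only [hcfn]
        rw [hb1, hb2]
        group
      have hcB1 : B1.card ≤ Bs.card := by
        apply card_le_card_of_injOn (fun p : G × G => (x * p.1, p.1⁻¹ * p.2))
        · intro p hp
          rw [hB1, mem_coe, mem_filter] at hp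
          exact hp.2
        · intro p _ q _ hpq
          simp only [Prod.mk.injEq] at hpq
          have h1 : p.1 = q.1 := mul_left_cancel hpq.1
          have h2 : p.2 = q.2 := by
            have := hpq.2
            rw [h1] at this
            exact mul_left_cancel this
          exact Prod.ext h1 h2
      have hcB2 : B2.card ≤ Bs.card := by
        apply card_le_card_of_injOn (fun p : G × G => (p.1, p.1⁻¹ * p.2))
        · intro p hp
          rw [hB2, mem_coe, mem_filter] at hp
          exact hp.2
        · intro p _ q _ hpq
          simp only [Prod.mk.injEq] at hpq
          have h1 : p.1 = q.1 := hpq.1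
          have h2 : p.2 = q.2 := by
            have := hpq.2
            rw [h1] at this
            exact mul_left_cancel this
          exact Prod.ext h1 h2
      have := (card_le_card hsub).trans (card_union_le B1 B2)
      have hCeq : Coll.card = #(filter (fun p : G × G => cfn x p.2 = cfn x p.1) univ) := rfl
      have hNeq2 : NColl.card = #(filter (fun p : G × G => ¬ cfn x p.2 = cfn x p.1) univ) := rfl
      omega
    -- upper bounds on collisions
    have hColl_sum : Coll.card = ∑ y : G, (univ.filter fun z => cfn x z = cfn x y).card := by
      rw [hColl, card_filter, Fintype.sum_prod_type]
      congr 1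
      funext y
      rw [card_filter]
    have hfiber_le : ∀ y : G, (univ.filter fun z => cfn x z = cfn x y).card ≤ M := by
      intro y
      exact hmspec x (cfn x y)
    have hColl_ub1 : Coll.card ≤ n * M := by
      rw [hColl_sum]
      calc ∑ y : G, (univ.filter fun z => cfn x z = cfn x y).card ≤ ∑ _y : G, M :=
            Finset.sum_le_sum (fun y _ => hfiber_le y)
        _ = n * M := by simp [mul_comm, hn]
    have hColl_ub2 : Coll.card ≤ M * M + (n - M) * (n - M) := by
      rw [hColl_sum]
      rw [← Finset.sum_filter_add_sum_filter_not univ (fun y => cfn x y = hm x)]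
      have hpartn := card_filter_add_card_filter_not
        (s := (univ : Finset G)) (fun y => cfn x y = hm x)
      have huniv : (univ : Finset G).card = n := by simp [hn]
      rw [huniv] at hpartn
      have hSmax : (univ.filter fun y => cfn x y = hm x).card = M := rfl
      gcongr ?_ + ?_
      · calc ∑ y ∈ univ.filter (fun y => cfn x y = hm x),
              (univ.filter fun z => cfn x z = cfn x y).card
            ≤ ∑ _y ∈ univ.filter (fun y => cfn x y = hm x), M :=
              Finset.sum_le_sum (fun y _ => hfiber_le y)
          _ = M * M := by rw [Finset.sum_const, hSmax, smul_eq_mul]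
      · have hbound : ∀ y ∈ univ.filter (fun y => ¬ cfn x y = hm x),
            (univ.filter fun z => cfn x z = cfn x y).card ≤ n - M := by
          intro y hy
          rw [mem_filter] at hy
          have hsub2 : (univ.filter fun z => cfn x z = cfn x y)
              ⊆ univ.filter (fun z => ¬ cfn x z = hm x) := by
            intro z hz
            rw [mem_filter] at hz ⊢
            exact ⟨mem_univ _, by rw [hz.2]; exact hy.2⟩
          have := card_le_card hsub2
          omega
        calc ∑ y ∈ univ.filter (fun y => ¬ cfn x y = hm x),
              (univ.filter fun z => cfn x z = cfn x y).card
            ≤ ∑ _y ∈ univ.filter (fun y => ¬ cfn x y = hm x), (n - M) :=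
              Finset.sum_le_sum hbound
          _ = (n - M) * (n - M) := by
              rw [Finset.sum_const, smul_eq_mul]
              congr 1
              omega
    -- conclude 2n < 3M
    by_contra hcon
    push_neg at hcon
    rcases le_or_gt (2 * M) n with hA | hB
    · nlinarith [hColl_lb, hColl_ub1, hBcard, sq_nonneg n, hnpos]
    · zify [hMn] at hColl_ub2
      have h1 : (0 : ℤ) ≤ 2 * n - 3 * M := by
        have : (3 : ℤ) * M ≤ 2 * n := by exact_mod_cast hcon
        omega
      have h2 : (0 : ℤ) ≤ 3 * M - n := by
        have : (n : ℤ) < 2 * M := by exact_mod_cast hB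
        omega
      have hlb : (n : ℤ) ^ 2 ≤ Coll.card + 2 * Bs.card := by exact_mod_cast hColl_lb
      have hbc : (9 : ℤ) * Bs.card < 2 * n ^ 2 := by exact_mod_cast hBcard
      nlinarith [mul_nonneg h1 h2]
  -- hm is a homomorphism
  have hmul : ∀ a b : G, hm (a * b) = hm a * hm b := by
    intro a b
    set T1 := univ.filter (fun y => cfn b y = hm b) with hT1
    set T2 := univ.filter (fun y => cfn a (b * y) = hm a) with hT2
    set T3 := univ.filter (fun y => cfn (a * b) y = hm (a * b)) with hT3
    have hc1 : 2 * n < 3 * T1.card := hM b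
    have hc2 : 2 * n < 3 * T2.card := by
      have heq : T2.card = cnt a (hm a) := by
        apply card_nbij' (fun y => b * y) (fun z => b⁻¹ * z)
        · intro y hy
          rw [hT2, mem_coe, mem_filter] at hy
          exact mem_filter.mpr ⟨mem_univ _, hy.2⟩
        · intro z hz
          rw [mem_coe, mem_filter] at hz
          refine mem_filter.mpr ⟨mem_univ _, ?_⟩
          have e : b * (b⁻¹ * z) = z := by group
          rw [e]
          exact hz.2
        · intro y _
          group
        · intro z _
          group
      rw [heq]
      exact hM a
    have hc3 : 2 * n < 3 * T3.card := hM (a * b)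
    have hint : ((T1 ∩ T2) ∩ T3).Nonempty := by
      have e1 := card_inter_add_card_union T1 T2
      have e2 := card_inter_add_card_union (T1 ∩ T2) T3
      have u1 : (T1 ∪ T2).card ≤ n := by
        rw [hn]
        simpa using card_le_univ (T1 ∪ T2)
      have u2 : ((T1 ∩ T2) ∪ T3).card ≤ n := by
        rw [hn]
        simpa using card_le_univ ((T1 ∩ T2) ∪ T3)
      rw [← card_pos]
      omega
    obtain ⟨y, hy⟩ := hint
    rw [mem_inter, mem_inter] at hy
    obtain ⟨⟨hy1, hy2⟩, hy3⟩ := hy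
    rw [hT1, mem_filter] at hy1
    rw [hT2, mem_filter] at hy2
    rw [hT3, mem_filter] at hy3
    have e1 : f (b * y) = hm b * f y := by
      have h := hy1.2
      simp only [hcfn] at h
      rw [← h]
      group
    have e2 : f (a * (b * y)) = hm a * f (b * y) := by
      have h := hy2.2
      simp only [hcfn] at h
      rw [← h]
      group
    have e3 : f ((a * b) * y) = hm (a * b) * f y := by
      have h := hy3.2
      simp only [hcfn] at h
      rw [← h]
      group
    have key : hm (a * b) * f y = (hm a * hm b) * f y := by
      rw [← e3, mul_assoc a b y, e2, e1, mul_assoc]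
    exact mul_right_cancel key
  -- the agreement set
  set Aset : Finset G :=
    univ.filter (fun x => n ≤ 3 * (univ.filter (fun y => (x, y) ∈ Zs)).card) with hAset
  have hAcard : 2 * n < 3 * Aset.card := by
    have hfib : Zs.card = ∑ x : G, (univ.filter (fun y => (x, y) ∈ Zs)).card := by
      rw [Finset.card_eq_sum_card_fiberwise
        (f := Prod.fst) (t := univ) (fun p _ => mem_univ _)]
      apply Finset.sum_congr rfl
      intro x _
      apply card_nbij' (fun p : G × G => p.2) (fun y => (x, y))
      · intro p hp
        rw [mem_coe, mem_filter] at hp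
        refine mem_filter.mpr ⟨mem_univ _, ?_⟩
        have hpe : (x, p.2) = p := by
          rw [← hp.2]
        rw [hpe]
        exact hp.1
      · intro y hy
        rw [mem_coe, mem_filter] at hy
        exact mem_filter.mpr ⟨hy.2, rfl⟩
      · intro p hp
        rw [mem_coe, mem_filter] at hp
        rw [← hp.2]
      · intro y _
        rfl
    by_contra hcon
    push_neg at hcon
    have hsplit := Finset.sum_filter_add_sum_filter_not univ (fun x => x ∈ Aset)
      (fun x => (univ.filter (fun y => (x, y) ∈ Zs)).card)
    have hfA : (univ.filter (fun x : G => x ∈ Aset)) = Aset := by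
      simp [Finset.filter_mem_eq_inter]
    have hb1 : ∑ x ∈ univ.filter (fun x : G => x ∈ Aset),
        (univ.filter (fun y => (x, y) ∈ Zs)).card ≤ Aset.card * n := by
      rw [hfA]
      calc ∑ x ∈ Aset, (univ.filter (fun y => (x, y) ∈ Zs)).card
          ≤ ∑ _x ∈ Aset, n := Finset.sum_le_sum (fun x _ => by
            rw [hn]
            simpa using card_le_univ (univ.filter (fun y => (x, y) ∈ Zs)))
        _ = Aset.card * n := by rw [Finset.sum_const, smul_eq_mul]
    have hb2 : ∀ x ∈ univ.filter (fun x : G => ¬ x ∈ Aset),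
        3 * (univ.filter (fun y => (x, y) ∈ Zs)).card < n := by
      intro x hx
      rw [mem_filter] at hx
      have hx2 := hx.2
      rw [hAset, mem_filter] at hx2
      push_neg at hx2
      exact hx2 (mem_univ _)
    have hb2' : ∑ x ∈ univ.filter (fun x : G => ¬ x ∈ Aset),
        3 * (univ.filter (fun y => (x, y) ∈ Zs)).card ≤ (n - Aset.card) * n := by
      have hcnc := card_filter_add_card_filter_not
        (s := (univ : Finset G)) (fun x : G => x ∈ Aset)
      rw [hfA] at hcnc
      have huniv : (univ : Finset G).card = n := by rw [hn]; simp
      calc ∑ x ∈ univ.filter (fun x : G => ¬ x ∈ Aset),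
            3 * (univ.filter (fun y => (x, y) ∈ Zs)).card
          ≤ ∑ _x ∈ univ.filter (fun x : G => ¬ x ∈ Aset), n :=
            Finset.sum_le_sum (fun x hx => le_of_lt (hb2 x hx))
        _ = (n - Aset.card) * n := by
            rw [Finset.sum_const, smul_eq_mul]
            congr 1
            omega
    -- combine
    have h9 : 3 * Zs.card ≤ 3 * (Aset.card * n) + (n - Aset.card) * n := by
      rw [hfib, ← hsplit, Nat.mul_add]
      have g1 : 3 * ∑ x ∈ univ.filter (fun x : G => x ∈ Aset),
          (univ.filter (fun y => (x, y) ∈ Zs)).card ≤ 3 * (Aset.card * n) :=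
        Nat.mul_le_mul_left 3 hb1
      have g2 : 3 * ∑ x ∈ univ.filter (fun x : G => ¬ x ∈ Aset),
          (univ.filter (fun y => (x, y) ∈ Zs)).card ≤ (n - Aset.card) * n := by
        rw [Finset.mul_sum]
        exact hb2'
      exact Nat.add_le_add g1 g2
    have hAn : Aset.card ≤ n := by rw [hn]; simpa using card_le_univ Aset
    zify [hAn] at h9
    have hzc : (7 : ℤ) * n ^ 2 < 9 * Zs.card := by exact_mod_cast hZcard
    have hcon' : (3 : ℤ) * Aset.card ≤ 2 * n := by exact_mod_cast hcon
    have key : ∀ N A Zc : ℤ, 0 ≤ N → 3 * A ≤ 2 * N → 7 * N ^ 2 < 9 * Zc →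
        3 * Zc ≤ 3 * (A * N) + (N - A) * N → False := by
      intro N A Zc h0 h1 h2 h3
      nlinarith [mul_le_mul_of_nonneg_left h1 (by linarith : (0:ℤ) ≤ 2 * N)]
    exact key n Aset.card Zs.card (by positivity) hcon' hzc h9
  -- on Aset, hm agrees with f and γ x is in the range of κ
  have hAprop : ∀ x ∈ Aset, hm x = f x ∧ κ (f x) = γ x := by
    intro x hx
    rw [hAset, mem_filter] at hx
    have hzx := hx.2
    have hzne : (univ.filter (fun y => (x, y) ∈ Zs)).Nonempty := by
      rw [← card_pos]
      omega
    obtain ⟨y0, hy0⟩ := hzne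
    rw [mem_filter] at hy0
    have hk : κ (f x) = γ x := (hZmul _ hy0.2).2
    have hsub : (univ.filter (fun y => (x, y) ∈ Zs))
        ⊆ univ.filter (fun y => cfn x y = f x) := by
      intro y hy
      rw [mem_filter] at hy ⊢
      refine ⟨mem_univ _, ?_⟩
      have hmu := (hZmul _ hy.2).1
      simp only [hcfn]
      rw [hmu]
      group
    by_cases heq : hm x = f x
    · exact ⟨heq, hk⟩
    · exfalso
      have hdis : Disjoint (univ.filter (fun y => cfn x y = f x))
          (univ.filter (fun y => cfn x y = hm x)) := by
        rw [Finset.disjoint_left]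
        intro y hy1 hy2
        rw [mem_filter] at hy1 hy2
        exact heq (hy2.2.symm.trans hy1.2)
      have hu := card_union_of_disjoint hdis
      have hle : ((univ.filter (fun y => cfn x y = f x))
          ∪ (univ.filter (fun y => cfn x y = hm x))).card ≤ n := by
        rw [hn]
        simpa using card_le_univ _
      have h1 := card_le_card hsub
      have h2 := hM x
      have h3 : cnt x (hm x) = (univ.filter (fun y => cfn x y = hm x)).card := rfl
      omega
  -- conclude
  refine ⟨MonoidHom.mk' hm hmul, ?_⟩
  rw [injective_iff_map_eq_one]
  intro a ha
  by_contra hne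
  have ha' : hm a = 1 := ha
  have hdis : Disjoint Aset (univ.filter (fun x => x * a ∈ Aset)) := by
    rw [Finset.disjoint_left]
    intro x hx hx2
    rw [mem_filter] at hx2
    obtain ⟨h1, h2⟩ := hAprop x hx
    obtain ⟨h1', h2'⟩ := hAprop _ hx2.2
    have hmm : hm (x * a) = hm x := by rw [hmul, ha', mul_one]
    have hgx : γ (x * a) = γ x := by rw [← h2', ← h1', hmm, h1, h2]
    have hxa : x * a = x := hγ hgx
    apply hne
    have : x * a = x * 1 := by rw [mul_one]; exact hxa
    exact mul_left_cancel this
  have hcard2 : (univ.filter (fun x => x * a ∈ Aset)).card = Aset.card := by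
    apply card_nbij' (fun x => x * a) (fun x => x * a⁻¹)
    · intro x hx
      rw [mem_coe, mem_filter] at hx
      exact hx.2
    · intro x hx
      refine mem_filter.mpr ⟨mem_univ _, ?_⟩
      have e : x * a⁻¹ * a = x := by group
      rw [e]
      exact hx
    · intro x _
      group
    · intro x _
      group
  have hu := card_union_of_disjoint hdis
  have hle : (Aset ∪ univ.filter (fun x => x * a ∈ Aset)).card ≤ n := by
    rw [hn]
    simpa using card_le_univ _
  omega
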